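/- Let F : [0, ∞) → (0, ∞)^I be a solution of the discrete exact-resonance acoustic kinetic system with strictly positive values. Then the trajectory is persistent and bounded: there exist constants 0 < m ≤ M such that m ≤ F_k(t) ≤ M for all k ∈ {1,…,I} and all t ≥ 0. -/

import Mathlib

open scoped BigOperators Classical

/-- Right-hand side of the discrete exact-resonance acoustic kinetic system on one ray:
for `k₁ ∈ {1,…,I}` and kernel `V_{k₁,k₂,k₃} = μ k₁ k₂ k₃`,
`Q_{k₁}[F] = ∑_{k₂+k₃=k₁} V (F_{k₂}F_{k₃} − F_{k₁}(F_{k₂}+F_{k₃}))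
  − 2 ∑_{k₁+k₂=k₃} V (F_{k₁}F_{k₂} − F_{k₃}(F_{k₁}+F_{k₂}))`. -/
noncomputable def Qd (I : ℕ) (μ : ℝ) (F : ℕ → ℝ) (k1 : ℕ) : ℝ :=
  (∑ k2 ∈ Finset.Icc 1 I, ∑ k3 ∈ Finset.Icc 1 I,
      if k2 + k3 = k1 then μ * k1 * k2 * k3 * (F k2 * F k3 - F k1 * (F k2 + F k3)) else 0)
  - 2 * ∑ k2 ∈ Finset.Icc 1 I, ∑ k3 ∈ Finset.Icc 1 I,
      if k1 + k2 = k3 then μ * k3 * k1 * k2 * (F k1 * F k2 - F k3 * (F k1 + F k2)) else 0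

noncomputable def Wt (μ : ℝ) (F : ℕ → ℝ) (a b : ℕ) : ℝ :=
  μ * ((a + b : ℕ) : ℝ) * a * b * (F a * F b - F (a + b) * (F a + F b))

lemma Wt_symm (μ : ℝ) (F : ℕ → ℝ) (a b : ℕ) : Wt μ F a b = Wt μ F b a := by
  unfold Wt; rw [Nat.add_comm b a]; ring

lemma tri (S : Finset ℕ) (f : ℕ → ℕ → ℕ → ℝ) :
    ∑ a ∈ S, ∑ b ∈ S, ∑ c ∈ S, (if b + c = a then f a b c else 0)
    = ∑ b ∈ S, ∑ c ∈ S, if b + c ∈ S then f (b+c) b c else 0 := by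
  rw [Finset.sum_comm]
  refine Finset.sum_congr rfl fun b _ => ?_
  rw [Finset.sum_comm]
  exact Finset.sum_congr rfl fun c _ => Finset.sum_ite_eq S (b+c) (fun a => f a b c)

lemma sum_mul_Qd (I : ℕ) (μ : ℝ) (F : ℕ → ℝ) (g : ℕ → ℝ) :
    ∑ k ∈ Finset.Icc 1 I, g k * Qd I μ F k
    = ∑ a ∈ Finset.Icc 1 I, ∑ b ∈ Finset.Icc 1 I,
        if a + b ∈ Finset.Icc 1 I then (g (a+b) - g a - g b) * Wt μ F a b else 0 := by
  set S := Finset.Icc 1 I with hS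
  have h1 : ∑ k ∈ S, g k *
      (∑ a ∈ S, ∑ b ∈ S,
        if a + b = k then μ * k * a * b * (F a * F b - F k * (F a + F b)) else 0)
      = ∑ a ∈ S, ∑ b ∈ S, if a + b ∈ S then g (a+b) * Wt μ F a b else 0 := by
    simp only [Finset.mul_sum, mul_ite, mul_zero]
    exact tri S (fun k a b => g k * (μ * k * a * b * (F a * F b - F k * (F a + F b))))
  have h2 : ∑ k ∈ S, g k *
      (2 * ∑ a ∈ S, ∑ b ∈ S,
        if k + a = b then μ * b * k * a * (F k * F a - F b * (F k + F a)) else 0)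
      = 2 * ∑ k ∈ S, ∑ a ∈ S, if k + a ∈ S then g k * Wt μ F k a else 0 := by
    rw [Finset.mul_sum]
    refine Finset.sum_congr rfl fun k _ => ?_
    have : ∀ a ∈ S, (∑ b ∈ S,
        if k + a = b then μ * b * k * a * (F k * F a - F b * (F k + F a)) else 0)
        = if k + a ∈ S then Wt μ F k a else 0 :=
      fun a _ => Finset.sum_ite_eq S (k+a)
        (fun b => μ * b * k * a * (F k * F a - F b * (F k + F a)))
    rw [Finset.sum_congr rfl this]
    rw [show g k * (2 * ∑ a ∈ S, if k + a ∈ S then Wt μ F k a else 0)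
        = 2 * (g k * ∑ a ∈ S, if k + a ∈ S then Wt μ F k a else 0) by ring]
    rw [Finset.mul_sum]
    congr 1
    refine Finset.sum_congr rfl fun a _ => ?_
    by_cases h : k + a ∈ S
    · rw [if_pos h, if_pos h]
    · rw [if_neg h, if_neg h, mul_zero]
  have hsym : ∑ a ∈ S, ∑ b ∈ S, (if a + b ∈ S then g a * Wt μ F a b else 0)
      = ∑ a ∈ S, ∑ b ∈ S, (if a + b ∈ S then g b * Wt μ F a b else 0) := by
    rw [Finset.sum_comm]
    refine Finset.sum_congr rfl fun a _ => Finset.sum_congr rfl fun b _ => ?_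
    rw [Nat.add_comm b a, Wt_symm μ F b a]
  have hQ : ∑ k ∈ S, g k * Qd I μ F k
      = (∑ k ∈ S, g k *
        (∑ a ∈ S, ∑ b ∈ S,
          if a + b = k then μ * k * a * b * (F a * F b - F k * (F a + F b)) else 0))
        - ∑ k ∈ S, g k *
        (2 * ∑ a ∈ S, ∑ b ∈ S,
          if k + a = b then μ * b * k * a * (F k * F a - F b * (F k + F a)) else 0) := by
    rw [← Finset.sum_sub_distrib]
    exact Finset.sum_congr rfl fun k _ => by rw [Qd, ← hS]; ring
  rw [hQ, h1, h2]
  rw [show (2 : ℝ) * ∑ k ∈ S, ∑ a ∈ S, (if k + a ∈ S then g k * Wt μ F k a else 0)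
      = (∑ a ∈ S, ∑ b ∈ S, (if a + b ∈ S then g a * Wt μ F a b else 0))
        + ∑ a ∈ S, ∑ b ∈ S, (if a + b ∈ S then g b * Wt μ F a b else 0) by
    rw [← hsym]; ring]
  rw [sub_add_eq_sub_sub, ← Finset.sum_sub_distrib, ← Finset.sum_sub_distrib]
  refine Finset.sum_congr rfl fun a _ => ?_
  rw [← Finset.sum_sub_distrib, ← Finset.sum_sub_distrib]
  refine Finset.sum_congr rfl fun b _ => ?_
  by_cases h : a + b ∈ S
  · simp only [if_pos h]; ring
  · simp only [if_neg h]; ring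

lemma sum_k_Qd (I : ℕ) (μ : ℝ) (F : ℕ → ℝ) :
    ∑ k ∈ Finset.Icc 1 I, (k : ℝ) * Qd I μ F k = 0 := by
  rw [sum_mul_Qd I μ F (fun k => (k : ℝ))]
  refine Finset.sum_eq_zero fun a _ => Finset.sum_eq_zero fun b _ => ?_
  by_cases h : a + b ∈ Finset.Icc 1 I
  · rw [if_pos h]
    have : ((a + b : ℕ) : ℝ) - (a : ℝ) - (b : ℝ) = 0 := by push_cast; ring
    rw [this, zero_mul]
  · rw [if_neg h]

lemma sum_Qd_div (I : ℕ) (μ : ℝ) (hμ : 0 ≤ μ) (F : ℕ → ℝ)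
    (hF : ∀ k ∈ Finset.Icc 1 I, 0 < F k) :
    0 ≤ ∑ k ∈ Finset.Icc 1 I, (F k)⁻¹ * Qd I μ F k := by
  rw [sum_mul_Qd I μ F (fun k => (F k)⁻¹)]
  refine Finset.sum_nonneg fun a ha => Finset.sum_nonneg fun b hb => ?_
  by_cases h : a + b ∈ Finset.Icc 1 I
  · rw [if_pos h]
    have hfa := hF a ha
    have hfb := hF b hb
    have hfc := hF (a+b) h
    have key : ((F (a+b))⁻¹ - (F a)⁻¹ - (F b)⁻¹) * Wt μ F a b
        = μ * ((a+b : ℕ) : ℝ) * a * b *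
          (F a * F b - F (a+b) * (F a + F b))^2 / (F a * F b * F (a+b)) := by
      unfold Wt
      field_simp
      ring
    rw [key]
    apply div_nonneg
    · have : (0:ℝ) ≤ μ * ((a+b : ℕ) : ℝ) * a * b := by positivity
      exact mul_nonneg this (sq_nonneg _)
    · positivity
  · rw [if_neg h]

/-- Persistence and boundedness: every positive solution of the discrete exact-resonance
acoustic kinetic system satisfies `m ≤ F_k(t) ≤ M` for some `0 < m ≤ M`. -/
theorem persistence_and_boundedness (I : ℕ) (hI : 0 < I) (μ : ℝ) (hμ : 0 < μ)
    (F : ℝ → ℕ → ℝ)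
    (hsol : ∀ k ∈ Finset.Icc 1 I, ∀ t : ℝ, 0 ≤ t →
      HasDerivAt (fun s => F s k) (Qd I μ (F t) k) t)
    (hpos : ∀ k ∈ Finset.Icc 1 I, ∀ t : ℝ, 0 ≤ t → 0 < F t k) :
    ∃ m M : ℝ, 0 < m ∧ m ≤ M ∧
      ∀ k ∈ Finset.Icc 1 I, ∀ t : ℝ, 0 ≤ t → m ≤ F t k ∧ F t k ≤ M := by
  classical
  have h1S : 1 ∈ Finset.Icc 1 I := Finset.mem_Icc.2 ⟨le_refl 1, hI⟩
  -- the conserved energy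
  have hE' : ∀ t : ℝ, 0 ≤ t →
      HasDerivAt (fun s => ∑ k ∈ Finset.Icc 1 I, (k : ℝ) * F s k) 0 t := by
    intro t ht
    have h := HasDerivAt.fun_sum (u := Finset.Icc 1 I)
      (A := fun k s => (k : ℝ) * F s k) (A' := fun k => (k : ℝ) * Qd I μ (F t) k)
      (fun k hk => (hsol k hk t ht).const_mul (k : ℝ))
    rwa [sum_k_Qd I μ (F t)] at h
  have hEconst : ∀ t : ℝ, 0 ≤ t →
      ∑ k ∈ Finset.Icc 1 I, (k : ℝ) * F t k = ∑ k ∈ Finset.Icc 1 I, (k : ℝ) * F 0 k := by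
    intro t ht
    exact constant_of_has_deriv_right_zero
      (fun x hx => (hE' x hx.1).continuousAt.continuousWithinAt)
      (fun x hx => (hE' x hx.1).hasDerivWithinAt)
      t (Set.mem_Icc.2 ⟨ht, le_rfl⟩)
  set M : ℝ := ∑ k ∈ Finset.Icc 1 I, (k : ℝ) * F 0 k with hMdef
  have hMub : ∀ k ∈ Finset.Icc 1 I, ∀ t : ℝ, 0 ≤ t → F t k ≤ M := by
    intro k hk t ht
    have h1k : (1 : ℝ) ≤ (k : ℝ) := by exact_mod_cast (Finset.mem_Icc.1 hk).1
    have hle : (k : ℝ) * F t k ≤ ∑ j ∈ Finset.Icc 1 I, (j : ℝ) * F t j :=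
      Finset.single_le_sum
        (fun j hj => mul_nonneg (Nat.cast_nonneg j) (hpos j hj t ht).le) hk
    calc F t k = 1 * F t k := (one_mul _).symm
      _ ≤ (k : ℝ) * F t k := mul_le_mul_of_nonneg_right h1k (hpos k hk t ht).le
      _ ≤ ∑ j ∈ Finset.Icc 1 I, (j : ℝ) * F t j := hle
      _ = M := hEconst t ht
  have hM0 : 0 < M := lt_of_lt_of_le (hpos 1 h1S 0 le_rfl) (hMub 1 h1S 0 le_rfl)
  -- the entropy
  have hH' : ∀ t : ℝ, 0 ≤ t →
      HasDerivAt (fun s => ∑ k ∈ Finset.Icc 1 I, Real.log (F s k))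
        (∑ k ∈ Finset.Icc 1 I, Qd I μ (F t) k / F t k) t := by
    intro t ht
    exact HasDerivAt.fun_sum (fun k hk => (hsol k hk t ht).log (ne_of_gt (hpos k hk t ht)))
  have hH'nonneg : ∀ t : ℝ, 0 ≤ t →
      0 ≤ ∑ k ∈ Finset.Icc 1 I, Qd I μ (F t) k / F t k := by
    intro t ht
    have h := sum_Qd_div I μ hμ.le (F t) (fun k hk => hpos k hk t ht)
    exact le_of_le_of_eq h
      (Finset.sum_congr rfl fun k _ => (div_eq_inv_mul _ _).symm)
  have hHmono : MonotoneOn (fun s => ∑ k ∈ Finset.Icc 1 I, Real.log (F s k))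
      (Set.Ici (0:ℝ)) := by
    apply monotoneOn_of_deriv_nonneg (convex_Ici 0)
    · exact fun x hx => (hH' x hx).continuousAt.continuousWithinAt
    · intro x hx
      rw [interior_Ici] at hx
      exact (hH' x (le_of_lt hx)).differentiableAt.differentiableWithinAt
    · intro x hx
      rw [interior_Ici] at hx
      rw [(hH' x (le_of_lt hx)).deriv]
      exact hH'nonneg x (le_of_lt hx)
  have hHge : ∀ t : ℝ, 0 ≤ t →
      ∑ k ∈ Finset.Icc 1 I, Real.log (F 0 k) ≤ ∑ k ∈ Finset.Icc 1 I, Real.log (F t k) :=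
    fun t ht => hHmono (Set.mem_Ici.2 le_rfl) (Set.mem_Ici.2 ht) ht
  set m : ℝ := Real.exp ((∑ k ∈ Finset.Icc 1 I, Real.log (F 0 k))
      - ((I - 1 : ℕ) : ℝ) * Real.log M) with hmdef
  have hmlb : ∀ k ∈ Finset.Icc 1 I, ∀ t : ℝ, 0 ≤ t → m ≤ F t k := by
    intro k hk t ht
    have hsum : ∑ j ∈ Finset.Icc 1 I, Real.log (F t j)
        = Real.log (F t k) + ∑ j ∈ (Finset.Icc 1 I).erase k, Real.log (F t j) :=
      (Finset.add_sum_erase _ _ hk).symm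
    have hub : ∑ j ∈ (Finset.Icc 1 I).erase k, Real.log (F t j)
        ≤ ((I - 1 : ℕ) : ℝ) * Real.log M := by
      have hcard : ((Finset.Icc 1 I).erase k).card = I - 1 := by
        rw [Finset.card_erase_of_mem hk, Nat.card_Icc]; omega
      have h := Finset.sum_le_card_nsmul ((Finset.Icc 1 I).erase k)
        (fun j => Real.log (F t j)) (Real.log M)
        (fun j hj => Real.log_le_log (hpos j (Finset.mem_of_mem_erase hj) t ht)
          (hMub j (Finset.mem_of_mem_erase hj) t ht))
      rwa [hcard, nsmul_eq_mul] at h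
    have hlogk : (∑ j ∈ Finset.Icc 1 I, Real.log (F 0 j))
        - ((I - 1 : ℕ) : ℝ) * Real.log M ≤ Real.log (F t k) := by
      have := hHge t ht
      rw [hsum] at this
      linarith
    calc m ≤ Real.exp (Real.log (F t k)) := Real.exp_le_exp.2 hlogk
      _ = F t k := Real.exp_log (hpos k hk t ht)
  exact ⟨m, M, Real.exp_pos _,
    (hmlb 1 h1S 0 le_rfl).trans (hMub 1 h1S 0 le_rfl),
    fun k hk t ht => ⟨hmlb k hk t ht, hMub k hk t ht⟩⟩
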